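/- Let Ψ : (a,b,c) ↦ exp(−a)·exp(−b)·exp(−c) and define Θ : (x,a,b,c) ↦ exp(−x)·Ψ(a,b,c)·exp(x) on n×n complex matrices. Then Θ is Fréchet differentiable, and there exists a constant C > 0, depending only on n and the chosen norm, such that for every h ∈ (0,1], all n×n complex matrices x, a, b, c with ‖x‖ ≤ h, ‖a‖ ≤ h, ‖b‖ ≤ h, ‖c‖ ≤ h and ‖a + b + c‖ ≤ h², and all n×n complex matrices x', a', b', c': ‖ DΘ(x,a,b,c)(x',a',b',c') − DΨ(a,b,c)(a',b',c') ‖ ≤ C ( h·‖a' + b' + c'‖ + h²·(‖x'‖ + ‖a'‖ + ‖b'‖ + ‖c'‖) ). -/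

import Mathlib

attribute [local instance]
  Matrix.frobeniusNormedAddCommGroup Matrix.frobeniusNormedRing
  Matrix.frobeniusNormedSpace Matrix.frobeniusNormedAlgebra

open NormedSpace

/-- The face holonomy `Ψ(a,b,c) = e^{−a} e^{−b} e^{−c}`. -/
noncomputable def holonomyPsi (n : ℕ)
    (p : Matrix (Fin n) (Fin n) ℂ × Matrix (Fin n) (Fin n) ℂ × Matrix (Fin n) (Fin n) ℂ) :
    Matrix (Fin n) (Fin n) ℂ :=
  exp (-p.1) * exp (-p.2.1) * exp (-p.2.2)

/-- The parallel-transported face holonomy `Θ(x,a,b,c) = e^{−x} Ψ(a,b,c) e^{x}`. -/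
noncomputable def transportedPsi (n : ℕ)
    (q : Matrix (Fin n) (Fin n) ℂ × Matrix (Fin n) (Fin n) ℂ ×
      Matrix (Fin n) (Fin n) ℂ × Matrix (Fin n) (Fin n) ℂ) :
    Matrix (Fin n) (Fin n) ℂ :=
  exp (-q.1) * holonomyPsi n q.2 * exp q.1

set_option linter.unusedSectionVars false

section ExpEst

variable {𝔸 : Type*} [NormedRing 𝔸] [NormedAlgebra ℂ 𝔸] [CompleteSpace 𝔸]

private lemma two_pow_le_succ_factorial (m : ℕ) : 2 ^ m ≤ Nat.factorial (m + 1) := by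
  induction m with
  | zero => simp [Nat.factorial]
  | succ k ih =>
    calc 2 ^ (k+1) = 2 * 2 ^ k := by ring
    _ ≤ (k + 2) * Nat.factorial (k+1) := by
        exact Nat.mul_le_mul (by omega) ih
    _ = Nat.factorial (k+2) := rfl

private lemma inv_succ_factorial_le (m : ℕ) :
    ((Nat.factorial (m+1) : ℝ))⁻¹ ≤ (1/2) ^ m := by
  rw [one_div, inv_pow]
  apply inv_anti₀ (by positivity)
  exact_mod_cast two_pow_le_succ_factorial m

private lemma inv_factorial_le (m : ℕ) :
    ((Nat.factorial m : ℝ))⁻¹ ≤ 2 * (1/2) ^ m := by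
  cases m with
  | zero => norm_num [Nat.factorial]
  | succ k =>
    calc ((Nat.factorial (k+1) : ℝ))⁻¹ ≤ (1/2) ^ k := inv_succ_factorial_le k
    _ = 2 * (1/2) ^ (k+1) := by ring

private lemma norm_le_of_geom_bound {E : Type*} [NormedAddCommGroup E] {u : ℕ → E} {S : E}
    (h : HasSum u S) {c : ℝ} (hb : ∀ n, ‖u n‖ ≤ c * (1/2) ^ n) : ‖S‖ ≤ 2 * c := by
  have hg : HasSum (fun n : ℕ => c * (1/2) ^ n) (c * 2) := by
    have := (hasSum_geometric_of_lt_one (by norm_num : (0:ℝ) ≤ 1/2) (by norm_num)).mul_left c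
    norm_num at this
    convert this using 1
  calc ‖S‖ = ‖∑' n, u n‖ := by rw [h.tsum_eq]
  _ ≤ c * 2 := tsum_of_norm_bounded hg hb
  _ = 2 * c := mul_comm _ _

private lemma hasSum_exp_shift (y : 𝔸) (k : ℕ) :
    HasSum (fun m => (((Nat.factorial (m + k)) : ℂ))⁻¹ • y ^ (m + k))
      (exp y - ∑ i ∈ Finset.range k, (((Nat.factorial i) : ℂ))⁻¹ • y ^ i) :=
  (hasSum_nat_add_iff' k).mpr (exp_series_hasSum_exp' y)

omit [CompleteSpace 𝔸] in
private lemma term_bound {y : 𝔸} (hy : ‖y‖ ≤ 1) (m j : ℕ) (hj : 1 ≤ j) :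
    ‖(((Nat.factorial (m + j)) : ℂ))⁻¹ • y ^ (m + j)‖ ≤ ‖y‖ ^ j * (1/2) ^ m := by
  rw [norm_smul, norm_inv, Complex.norm_natCast]
  have h1 : ‖y ^ (m + j)‖ ≤ ‖y‖ ^ (m + j) := norm_pow_le' y (by omega)
  have h2 : ‖y‖ ^ (m + j) ≤ ‖y‖ ^ j := by
    apply pow_le_pow_of_le_one (norm_nonneg y) hy; omega
  have h3 : ((Nat.factorial (m + j) : ℝ))⁻¹ ≤ (1/2) ^ m := by
    calc ((Nat.factorial (m + j) : ℝ))⁻¹ ≤ ((Nat.factorial (m + 1) : ℝ))⁻¹ := by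
          apply inv_anti₀ (by positivity)
          exact_mod_cast Nat.factorial_le (by omega)
    _ ≤ (1/2) ^ m := inv_succ_factorial_le m
  calc ((Nat.factorial (m + j) : ℝ))⁻¹ * ‖y ^ (m+j)‖ ≤ (1/2) ^ m * ‖y‖ ^ j := by
        apply mul_le_mul h3 (h1.trans h2) (norm_nonneg _) (by positivity)
  _ = ‖y‖ ^ j * (1/2) ^ m := mul_comm _ _

private lemma norm_exp_sub_one_le {y : 𝔸} (hy : ‖y‖ ≤ 1) : ‖exp y - 1‖ ≤ 2 * ‖y‖ := by
  have h := hasSum_exp_shift y 1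
  simp only [Finset.range_one, Finset.sum_singleton, Nat.factorial_zero, Nat.cast_one, inv_one,
    pow_zero, one_smul] at h
  refine norm_le_of_geom_bound h (fun m => ?_)
  simpa using term_bound hy m 1 le_rfl

private lemma norm_exp_sub_one_sub_le {y : 𝔸} (hy : ‖y‖ ≤ 1) :
    ‖exp y - 1 - y‖ ≤ 2 * ‖y‖ ^ 2 := by
  have h := hasSum_exp_shift y 2
  have hr : (∑ i ∈ Finset.range 2, (((Nat.factorial i) : ℂ))⁻¹ • y ^ i) = 1 + y := by
    simp [Finset.sum_range_succ, Nat.factorial]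
  rw [hr] at h
  have h' : HasSum (fun m => (((Nat.factorial (m + 2)) : ℂ))⁻¹ • y ^ (m + 2))
      (exp y - 1 - y) := by
    convert h using 1; abel
  refine norm_le_of_geom_bound h' (fun m => term_bound hy m 2 (by omega))

private lemma norm_exp_le' {y : 𝔸} (hy : ‖y‖ ≤ 1) : ‖exp y‖ ≤ ‖(1 : 𝔸)‖ + 2 := by
  have h1 : exp y = 1 + (exp y - 1) := by abel
  rw [h1]
  refine (norm_add_le _ _).trans ?_
  have := norm_exp_sub_one_le hy
  nlinarith [norm_nonneg y, norm_nonneg (1:𝔸)]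

private lemma hasSum_fderiv_exp (y : 𝔸) :
    HasSum (fun m => (expSeries ℂ 𝔸).derivSeries m (fun _ => y)) (fderiv ℂ (exp) y) := by
  have := (exp_hasFPowerSeriesOnBall (𝕂 := ℂ) (𝔸 := 𝔸)).fderiv.hasSum (y := y) (by simp)
  simpa using this

private lemma norm_derivSeries_apply (m : ℕ) (y : 𝔸) :
    ‖(expSeries ℂ 𝔸).derivSeries m (fun _ => y)‖ ≤ ((Nat.factorial m : ℝ))⁻¹ * ‖y‖ ^ m := by
  have hrw : (expSeries ℂ 𝔸).derivSeries m (fun _ => y) =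
      (continuousMultilinearCurryFin1 ℂ 𝔸 𝔸)
        ((expSeries ℂ 𝔸).changeOriginSeries 1 m (fun _ => y)) := rfl
  rw [hrw, LinearIsometryEquiv.norm_map]
  have h1 := (expSeries ℂ 𝔸).nnnorm_changeOriginSeries_apply_le_tsum 1 m y
  have hcard : Fintype.card {s : Finset (Fin (1 + m)) // s.card = m} = m + 1 := by
    rw [Fintype.card_subtype, ← Finset.powerset_univ, ← Finset.powersetCard_eq_filter,
      Finset.card_powersetCard, Finset.card_univ, Fintype.card_fin, add_comm,
      Nat.choose_succ_self_right]
  have h2 : (∑' _ : {s : Finset (Fin (1 + m)) // s.card = m},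
      (‖expSeries ℂ 𝔸 (1 + m)‖₊ * ‖y‖₊ ^ m)) =
      (m + 1) * (‖expSeries ℂ 𝔸 (1 + m)‖₊ * ‖y‖₊ ^ m) := by
    rw [tsum_fintype]
    simp [hcard, Finset.sum_const, mul_comm]
  have h3 : ‖expSeries ℂ 𝔸 (1 + m)‖ ≤ ((Nat.factorial (1 + m) : ℝ))⁻¹ := by
    have he : expSeries ℂ 𝔸 (1 + m) =
        (((Nat.factorial (1 + m)) : ℂ))⁻¹ • ContinuousMultilinearMap.mkPiAlgebraFin ℂ (1 + m) 𝔸 :=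
      rfl
    rw [he]
    refine (_root_.norm_smul_le ((((Nat.factorial (1 + m)) : ℂ))⁻¹)
      (ContinuousMultilinearMap.mkPiAlgebraFin ℂ (1 + m) 𝔸)).trans ?_
    rw [norm_inv, Complex.norm_natCast]
    have := ContinuousMultilinearMap.norm_mkPiAlgebraFin_le_of_pos
      (A := 𝔸) (𝕜 := ℂ) (n := 1 + m) (by omega)
    have h0 : (0:ℝ) ≤ ((Nat.factorial (1 + m) : ℝ))⁻¹ := by positivity
    nlinarith
  have h1' : ‖(expSeries ℂ 𝔸).changeOriginSeries 1 m (fun _ => y)‖ ≤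
      (m + 1) * (‖expSeries ℂ 𝔸 (1 + m)‖ * ‖y‖ ^ m) := by
    have hb := h1.trans_eq h2
    have hb' := NNReal.coe_le_coe.mpr hb
    push_cast at hb'
    simpa using hb'
  refine h1'.trans ?_
  have hy : (0:ℝ) ≤ ‖y‖ ^ m := by positivity
  have h4 : ((m:ℝ) + 1) * ((Nat.factorial (1 + m) : ℝ))⁻¹ = ((Nat.factorial m : ℝ))⁻¹ := by
    rw [add_comm 1 m, Nat.factorial_succ]
    push_cast
    rw [mul_inv, ← mul_assoc, mul_inv_cancel₀ (by positivity), one_mul]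
  calc ((m:ℝ) + 1) * (‖expSeries ℂ 𝔸 (1 + m)‖ * ‖y‖ ^ m)
      ≤ ((m:ℝ) + 1) * (((Nat.factorial (1 + m) : ℝ))⁻¹ * ‖y‖ ^ m) := by
        apply mul_le_mul_of_nonneg_left (mul_le_mul_of_nonneg_right h3 hy) (by positivity)
  _ = ((Nat.factorial m : ℝ))⁻¹ * ‖y‖ ^ m := by rw [← mul_assoc, h4]

private lemma derivSeries_zero_eq (y : 𝔸) :
    (expSeries ℂ 𝔸).derivSeries 0 (fun _ => y) = ContinuousLinearMap.id ℂ 𝔸 := by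
  have h0 := hasSum_fderiv_exp (0 : 𝔸)
  have hz : ∀ m ≠ 0, (expSeries ℂ 𝔸).derivSeries m (fun _ => (0:𝔸)) = 0 := by
    intro m hm
    haveI : Nonempty (Fin m) := ⟨⟨0, Nat.pos_of_ne_zero hm⟩⟩
    exact ContinuousMultilinearMap.map_zero _
  have hsum := h0.tsum_eq.symm
  rw [tsum_eq_single 0 hz] at hsum
  have hfz : fderiv ℂ (exp : 𝔸 → 𝔸) 0 = ContinuousLinearMap.id ℂ 𝔸 := by
    have := (hasFDerivAt_exp_zero (𝕂 := ℂ) (𝔸 := 𝔸)).fderiv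
    rw [this]; rfl
  have hconst : (expSeries ℂ 𝔸).derivSeries 0 (fun _ => y) =
      (expSeries ℂ 𝔸).derivSeries 0 (fun _ => (0:𝔸)) := by
    congr 1
    exact Subsingleton.elim _ _
  rw [hconst, ← hsum, hfz]

private lemma exp_differentiable : Differentiable ℂ (exp : 𝔸 → 𝔸) :=
  fun y => (exp_analytic y).differentiableAt

private lemma norm_fderiv_exp_le {y : 𝔸} (hy : ‖y‖ ≤ 1) : ‖fderiv ℂ (exp) y‖ ≤ 4 := by
  have h := hasSum_fderiv_exp y
  have hb : ‖fderiv ℂ (exp : 𝔸 → 𝔸) y‖ ≤ 2 * 2 := by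
    refine norm_le_of_geom_bound h (fun m => ?_)
    refine (norm_derivSeries_apply m y).trans ?_
    have h1 : ‖y‖ ^ m ≤ 1 := pow_le_one₀ (norm_nonneg y) hy
    have h2 := inv_factorial_le m
    have h3 : (0:ℝ) ≤ ((Nat.factorial m : ℝ))⁻¹ := by positivity
    nlinarith [pow_nonneg (norm_nonneg y) m, pow_pos (by norm_num : (0:ℝ) < 1/2) m]
  linarith

private lemma norm_fderiv_exp_sub_id_le {y : 𝔸} (hy : ‖y‖ ≤ 1) :
    ‖fderiv ℂ (exp) y - ContinuousLinearMap.id ℂ 𝔸‖ ≤ 2 * ‖y‖ := by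
  have h := hasSum_fderiv_exp y
  have h' := (hasSum_nat_add_iff' 1).mpr h
  simp only [Finset.range_one, Finset.sum_singleton, derivSeries_zero_eq] at h'
  refine norm_le_of_geom_bound h' (fun m => ?_)
  refine (norm_derivSeries_apply (m+1) y).trans ?_
  have h1 : ‖y‖ ^ (m+1) ≤ ‖y‖ := by
    rw [pow_succ, mul_comm]
    calc ‖y‖ * ‖y‖ ^ m ≤ ‖y‖ * 1 :=
          mul_le_mul_of_nonneg_left (pow_le_one₀ (norm_nonneg y) hy) (norm_nonneg y)
    _ = ‖y‖ := mul_one _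
  have h2 := inv_succ_factorial_le m
  have h3 : (0:ℝ) ≤ ((Nat.factorial (m+1) : ℝ))⁻¹ := by positivity
  have h4 : (0:ℝ) < (1/2:ℝ) ^ m := by positivity
  nlinarith [norm_nonneg y, pow_nonneg (norm_nonneg y) (m+1)]

private lemma norm_fderiv_exp_apply_sub_le {y : 𝔸} (hy : ‖y‖ ≤ 1) (v : 𝔸) :
    ‖fderiv ℂ exp y v - v‖ ≤ (2 * ‖y‖) * ‖v‖ := by
  have := ContinuousLinearMap.le_opNorm (fderiv ℂ exp y - ContinuousLinearMap.id ℂ 𝔸) v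
  simp only [ContinuousLinearMap.sub_apply, ContinuousLinearMap.coe_id', id_eq] at this
  exact this.trans (mul_le_mul_of_nonneg_right (norm_fderiv_exp_sub_id_le hy) (norm_nonneg _))

private lemma norm_fderiv_exp_apply_le {y : 𝔸} (hy : ‖y‖ ≤ 1) (v : 𝔸) :
    ‖fderiv ℂ exp y v‖ ≤ 4 * ‖v‖ :=
  (ContinuousLinearMap.le_opNorm _ _).trans
    (mul_le_mul_of_nonneg_right (norm_fderiv_exp_le hy) (norm_nonneg _))

private lemma exp_neg_mul_exp_eq_one (y : 𝔸) : exp (-y) * exp y = 1 := by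
  rw [← exp_add_of_commute_of_mem_ball (𝕂 := ℂ) (Commute.refl y).neg_left
    ((expSeries_radius_eq_top ℂ 𝔸).symm ▸ edist_lt_top _ _)
    ((expSeries_radius_eq_top ℂ 𝔸).symm ▸ edist_lt_top _ _), neg_add_cancel, exp_zero]

private lemma exp_mul_exp_neg_eq_one (y : 𝔸) : exp y * exp (-y) = 1 := by
  have := exp_neg_mul_exp_eq_one (𝔸 := 𝔸) (-y)
  rwa [neg_neg] at this

private lemma fderiv_exp_conj (x v : 𝔸) :
    fderiv ℂ (exp) (-x) (-v) =
      -(exp (-x) * (fderiv ℂ (exp) x v * exp (-x))) := by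
  have h1 : HasFDerivAt (fun y : 𝔸 => exp (-y))
      ((fderiv ℂ (exp) (-x)).comp (-(ContinuousLinearMap.id ℂ 𝔸))) x :=
    ((exp_differentiable (-x)).hasFDerivAt).comp x (hasFDerivAt_id x).neg
  have h2 := (exp_differentiable x).hasFDerivAt
  have h3 := h1.mul' h2
  have hfun : (fun y : 𝔸 => exp (-y) * exp y) = fun _ => (1 : 𝔸) :=
    funext fun y => exp_neg_mul_exp_eq_one y
  rw [show ((fun y : 𝔸 => exp (-y)) * exp) = fun _ => (1 : 𝔸) from hfun] at h3
  have h5 := h3.unique (hasFDerivAt_const 1 x)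
  have h6 := congrArg (fun (T : 𝔸 →L[ℂ] 𝔸) => T v) h5
  simp only [ContinuousLinearMap.add_apply, ContinuousLinearMap.smul_apply,
    ContinuousLinearMap.smulRight_apply, ContinuousLinearMap.comp_apply,
    ContinuousLinearMap.neg_apply, ContinuousLinearMap.coe_id', id_eq,
    ContinuousLinearMap.zero_apply, smul_eq_mul, op_smul_eq_mul] at h6
  have h7 : fderiv ℂ (exp) (-x) (-v) * (exp x * exp (-x)) =
      -(exp (-x) * fderiv ℂ (exp) x v) * exp (-x) := by
    rw [← mul_assoc]
    rw [show fderiv ℂ (exp) (-x) (-v) * exp x =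
      -(exp (-x) * fderiv ℂ (exp) x v) from by
        linear_combination (norm := noncomm_ring) h6]
  rw [exp_mul_exp_neg_eq_one, mul_one] at h7
  rw [h7]; noncomm_ring

private lemma fderiv_exp_neg_apply (x v : 𝔸) :
    fderiv ℂ (exp) (-x) v =
      exp (-x) * (fderiv ℂ (exp) x v * exp (-x)) := by
  have h := fderiv_exp_conj x (-v)
  rw [map_neg, map_neg] at h
  have := neg_injective h
  simpa using this

end ExpEst


section RingIds
variable {R : Type*} [Ring R]

private lemma ring_id1 (Ea Eb Ec A B C : R) :
    Ea * Eb * Ec - 1 = (Ea - 1 - (-A)) * (Eb * Ec) + (-A) * (Eb * Ec - 1)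
      + ((Eb - 1 - (-B)) * Ec + (-B) * (Ec - 1)) + ((Ec - 1 - (-C)) + -(A + B + C)) := by
  noncomm_ring

private lemma ring_id2 (Ea Eb Ec A B C DA DB DC : R) :
    -((A + DA) * Eb * Ec) - Ea * (B + DB) * Ec - Ea * Eb * (C + DC) + (A + B + C) =
      -(DA * (Eb * Ec)) - Ea * DB * Ec - (Ea * Eb) * DC
      - A * (Eb * Ec - 1) - (Ea - 1) * B * Ec - B * (Ec - 1) - (Ea * Eb - 1) * C := by
  noncomm_ring

private lemma ring_id3 (Exm Exp Ψ W P : R) :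
    Exm * ((Ψ - 1) * W - W * (Exm * (Ψ - 1) * Exp)) + Exm * (P * (Exp - 1) - (Exp - 1) * P)
      = (Exm * Ψ * W + Exm * P * Exp - Exm * (W * Exm) * Ψ * Exp - P)
        + (Exm * W * (Exm * Exp) - Exm * W) + (P - (Exm * Exp) * P) := by
  noncomm_ring

private lemma ring_id4 (P E S : R) :
    P * (E - 1) - (E - 1) * P =
      ((P + S) * (E - 1) - (E - 1) * (P + S)) - (S * (E - 1) - (E - 1) * S) := by
  noncomm_ring

end RingIds

set_option maxHeartbeats 0 in
set_option synthInstance.maxHeartbeats 400000 in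
/-- The derivative of the transported holonomy `Θ(x,a,b,c) = e^{−x} Ψ(a,b,c) e^{x}` differs
from the derivative of the holonomy `Ψ(a,b,c) = e^{−a} e^{−b} e^{−c}` by
`O(h‖a'+b'+c'‖ + h²(‖x'‖+‖a'‖+‖b'‖+‖c'‖))`: `Θ` is Fréchet differentiable and, with `‖·‖`
the (submultiplicative) Frobenius norm, there is `C > 0` depending only on `n` (and the
norm) such that for all `h ∈ (0,1]`, all `x, a, b, c` of norm at most `h` with
`‖a + b + c‖ ≤ h²`, and all directions `x', a', b', c'`,
`‖DΘ(x,a,b,c)(x',a',b',c') − DΨ(a,b,c)(a',b',c')‖ ≤ C (h ‖a'+b'+c'‖ + h² (‖x'‖+‖a'‖+‖b'‖+‖c'‖))`. -/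
theorem transported_holonomy_derivative (n : ℕ) :
    Differentiable ℂ (transportedPsi n) ∧
    ∃ C : ℝ, 0 < C ∧ ∀ h : ℝ, h ∈ Set.Ioc (0 : ℝ) 1 →
      ∀ x a b c : Matrix (Fin n) (Fin n) ℂ,
        ‖x‖ ≤ h → ‖a‖ ≤ h → ‖b‖ ≤ h → ‖c‖ ≤ h → ‖a + b + c‖ ≤ h ^ 2 →
        ∀ x' a' b' c' : Matrix (Fin n) (Fin n) ℂ,
          ‖fderiv ℂ (transportedPsi n) (x, a, b, c) (x', a', b', c') -
              fderiv ℂ (holonomyPsi n) (a, b, c) (a', b', c')‖ ≤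
            C * (h * ‖a' + b' + c'‖ + h ^ 2 * (‖x'‖ + ‖a'‖ + ‖b'‖ + ‖c'‖)) := by
  classical
  set M := Matrix (Fin n) (Fin n) ℂ with hM
  have hholo : Differentiable ℂ (holonomyPsi n) := by
    unfold holonomyPsi
    have hd := exp_differentiable (𝔸 := M)
    fun_prop
  have htrans : Differentiable ℂ (transportedPsi n) := by
    unfold transportedPsi
    have hd := exp_differentiable (𝔸 := M)
    fun_prop
  refine ⟨htrans, ?_⟩
  set K : ℝ := ‖(1 : M)‖ + 2 with hKdef
  have hK2 : (2:ℝ) ≤ K := by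
    have := norm_nonneg (1 : M); simp only [hKdef]; linarith
  have hK0 : (0:ℝ) < K := by linarith
  set C1 : ℝ := 2*K^2 + 4*K + 7 with hC1
  set C2 : ℝ := 2*(K^2 + K + 1) with hC2
  refine ⟨4*K*(1+K^2)*C1 + 4*K + 4*K*C2, by positivity, ?_⟩
  rintro h ⟨h0, h1⟩ x a b c hx ha hb hc habc x' a' b' c'
  -- basic norms
  have hx1 : ‖x‖ ≤ 1 := hx.trans h1
  have ha1 : ‖(-a : M)‖ ≤ 1 := by rw [norm_neg]; exact ha.trans h1
  have hb1 : ‖(-b : M)‖ ≤ 1 := by rw [norm_neg]; exact hb.trans h1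
  have hc1 : ‖(-c : M)‖ ≤ 1 := by rw [norm_neg]; exact hc.trans h1
  have hx1' : ‖(-x : M)‖ ≤ 1 := by rw [norm_neg]; exact hx.trans h1
  -- derivative of holonomyPsi, applied
  have hg1 : HasFDerivAt (fun p : M × M × M => exp (-p.1))
      ((fderiv ℂ (exp) (-a)).comp (-(ContinuousLinearMap.fst ℂ M (M × M)))) (a, b, c) :=
    ((exp_differentiable (-a)).hasFDerivAt).comp (a,b,c) (hasFDerivAt_fst.neg)
  have hg2 : HasFDerivAt (fun p : M × M × M => exp (-p.2.1))
      ((fderiv ℂ (exp) (-b)).comp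
        (-((ContinuousLinearMap.fst ℂ M M).comp (ContinuousLinearMap.snd ℂ M (M × M)))))
      (a, b, c) :=
    ((exp_differentiable (-b)).hasFDerivAt).comp (a,b,c)
      ((hasFDerivAt_fst.comp (a,b,c) hasFDerivAt_snd).neg)
  have hg3 : HasFDerivAt (fun p : M × M × M => exp (-p.2.2))
      ((fderiv ℂ (exp) (-c)).comp
        (-((ContinuousLinearMap.snd ℂ M M).comp (ContinuousLinearMap.snd ℂ M (M × M)))))
      (a, b, c) :=
    ((exp_differentiable (-c)).hasFDerivAt).comp (a,b,c)
      ((hasFDerivAt_snd.comp (a,b,c) hasFDerivAt_snd).neg)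
  have hG : HasFDerivAt (holonomyPsi n) _ (a, b, c) := (hg1.mul' hg2).mul' hg3
  have hPval : fderiv ℂ (holonomyPsi n) (a, b, c) (a', b', c') =
      -((fderiv ℂ (exp) (-a)) a' * exp (-b) * exp (-c))
      - exp (-a) * (fderiv ℂ (exp) (-b)) b' * exp (-c)
      - exp (-a) * exp (-b) * (fderiv ℂ (exp) (-c)) c' := by
    rw [hG.fderiv]
    change exp (-a) * exp (-b) * (fderiv ℂ exp (-c)) (-c')
      + (exp (-a) * (fderiv ℂ exp (-b)) (-b') + (fderiv ℂ exp (-a)) (-a') * exp (-b)) * exp (-c) = _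
    simp only [ContinuousLinearMap.add_apply, ContinuousLinearMap.smul_apply,
      ContinuousLinearMap.smulRight_apply, ContinuousLinearMap.comp_apply,
      ContinuousLinearMap.neg_apply, ContinuousLinearMap.coe_fst', ContinuousLinearMap.coe_snd',
      map_neg, smul_eq_mul, op_smul_eq_mul, Pi.mul_apply, ContinuousLinearMap.coe_add', Pi.add_apply]
    noncomm_ring
  -- derivative of transportedPsi, applied
  have hq0 : HasFDerivAt (fun q : M × M × M × M => exp (-q.1))
      ((fderiv ℂ (exp) (-x)).comp (-(ContinuousLinearMap.fst ℂ M (M × M × M))))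
      (x, a, b, c) :=
    ((exp_differentiable (-x)).hasFDerivAt).comp (x,a,b,c) (hasFDerivAt_fst.neg)
  have hqH : HasFDerivAt (fun q : M × M × M × M => holonomyPsi n q.2)
      ((fderiv ℂ (holonomyPsi n) (a,b,c)).comp (ContinuousLinearMap.snd ℂ M (M × M × M)))
      (x, a, b, c) :=
    by
      have hs : HasFDerivAt (Prod.snd : M × (M × M × M) → M × M × M)
          (ContinuousLinearMap.snd ℂ M (M × M × M)) (x, a, b, c) := hasFDerivAt_snd
      rw [hG.fderiv]; exact hG.comp (x,a,b,c) hs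
  have hq4 : HasFDerivAt (fun q : M × M × M × M => exp q.1)
      ((fderiv ℂ (exp) x).comp (ContinuousLinearMap.fst ℂ M (M × M × M)))
      (x, a, b, c) :=
    ((exp_differentiable x).hasFDerivAt).comp (x,a,b,c) hasFDerivAt_fst
  have hT : HasFDerivAt (transportedPsi n) _ (x, a, b, c) := (hq0.mul' hqH).mul' hq4
  have hTval : fderiv ℂ (transportedPsi n) (x, a, b, c) (x', a', b', c') =
      exp (-x) * holonomyPsi n (a,b,c) * (fderiv ℂ (exp) x) x'
      + exp (-x) * (fderiv ℂ (holonomyPsi n) (a,b,c) (a', b', c')) * exp x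
      - (fderiv ℂ (exp) (-x)) x' * holonomyPsi n (a,b,c) * exp x := by
    rw [hT.fderiv]
    change exp (-x) * holonomyPsi n (a, b, c) * (fderiv ℂ exp x) x'
      + (exp (-x) * (fderiv ℂ (holonomyPsi n) (a, b, c)) (a', b', c')
        + (fderiv ℂ exp (-x)) (-x') * holonomyPsi n (a, b, c)) * exp x = _
    simp only [ContinuousLinearMap.add_apply, ContinuousLinearMap.smul_apply,
      ContinuousLinearMap.smulRight_apply, ContinuousLinearMap.comp_apply,
      ContinuousLinearMap.neg_apply, ContinuousLinearMap.coe_fst', ContinuousLinearMap.coe_snd',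
      map_neg, smul_eq_mul, op_smul_eq_mul, Pi.mul_apply, ContinuousLinearMap.coe_add', Pi.add_apply]
    noncomm_ring
  -- abbreviations
  set Ea : M := exp (-a) with hEa
  set Eb : M := exp (-b) with hEb
  set Ec : M := exp (-c) with hEc
  set Exm : M := exp (-x) with hExm
  set Exp : M := exp x with hExp
  set W : M := (fderiv ℂ (exp) x) x' with hW
  set Da : M := (fderiv ℂ (exp) (-a)) a' - a' with hDa
  set Db : M := (fderiv ℂ (exp) (-b)) b' - b' with hDb
  set Dc : M := (fderiv ℂ (exp) (-c)) c' - c' with hDc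
  set P : M := fderiv ℂ (holonomyPsi n) (a, b, c) (a', b', c') with hP
  set Ψ : M := holonomyPsi n (a, b, c) with hΨ
  have hΨdef : Ψ = Ea * Eb * Ec := rfl
  have u1 : Exm * Exp = 1 := exp_neg_mul_exp_eq_one x
  have u2 : Exp * Exm = 1 := exp_mul_exp_neg_eq_one x
  -- norm bounds on the pieces
  have hEaK : ‖Ea‖ ≤ K := norm_exp_le' ha1
  have hEbK : ‖Eb‖ ≤ K := norm_exp_le' hb1
  have hEcK : ‖Ec‖ ≤ K := norm_exp_le' hc1
  have hExmK : ‖Exm‖ ≤ K := norm_exp_le' hx1'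
  have hEa1 : ‖Ea - 1‖ ≤ 2*h := by
    refine (norm_exp_sub_one_le ha1).trans ?_
    rw [norm_neg]; linarith
  have hEb1 : ‖Eb - 1‖ ≤ 2*h := by
    refine (norm_exp_sub_one_le hb1).trans ?_
    rw [norm_neg]; linarith
  have hEc1 : ‖Ec - 1‖ ≤ 2*h := by
    refine (norm_exp_sub_one_le hc1).trans ?_
    rw [norm_neg]; linarith
  have hExp1 : ‖Exp - 1‖ ≤ 2*h := by
    refine (norm_exp_sub_one_le hx1).trans ?_
    linarith
  have hWb : ‖W‖ ≤ 4 * ‖x'‖ := by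
    exact norm_fderiv_exp_apply_le hx1 x'
  have hDab : ‖Da‖ ≤ 2*h*‖a'‖ := by
    have h2 := norm_fderiv_exp_apply_sub_le ha1 a'
    rw [norm_neg] at h2
    refine h2.trans ?_
    calc (2 * ‖a‖) * ‖a'‖
      _ ≤ 2*h*‖a'‖ := mul_le_mul_of_nonneg_right (by linarith) (norm_nonneg _)
  have hDbb : ‖Db‖ ≤ 2*h*‖b'‖ := by
    have h2 := norm_fderiv_exp_apply_sub_le hb1 b'
    rw [norm_neg] at h2
    refine h2.trans ?_
    calc (2 * ‖b‖) * ‖b'‖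
      _ ≤ 2*h*‖b'‖ := mul_le_mul_of_nonneg_right (by linarith) (norm_nonneg _)
  have hDcb : ‖Dc‖ ≤ 2*h*‖c'‖ := by
    have h2 := norm_fderiv_exp_apply_sub_le hc1 c'
    rw [norm_neg] at h2
    refine h2.trans ?_
    calc (2 * ‖c‖) * ‖c'‖
      _ ≤ 2*h*‖c'‖ := mul_le_mul_of_nonneg_right (by linarith) (norm_nonneg _)
  -- product minus one bounds
  have hEbEc : ‖Eb * Ec - 1‖ ≤ 2*h*(K+1) := by
    have hid : Eb * Ec - 1 = (Eb - 1) * Ec + (Ec - 1) := by rw [sub_mul, one_mul, sub_add_sub_cancel]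
    rw [hid]
    calc ‖(Eb - 1) * Ec + (Ec - 1)‖ ≤ ‖(Eb - 1) * Ec‖ + ‖Ec - 1‖ := norm_add_le _ _
    _ ≤ ‖Eb - 1‖ * ‖Ec‖ + ‖Ec - 1‖ := by gcongr; exact norm_mul_le _ _
    _ ≤ (2*h) * K + 2*h := by gcongr
    _ = 2*h*(K+1) := by ring
  have hEaEb : ‖Ea * Eb - 1‖ ≤ 2*h*(K+1) := by
    have hid : Ea * Eb - 1 = (Ea - 1) * Eb + (Eb - 1) := by rw [sub_mul, one_mul, sub_add_sub_cancel]
    rw [hid]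
    calc ‖(Ea - 1) * Eb + (Eb - 1)‖ ≤ ‖(Ea - 1) * Eb‖ + ‖Eb - 1‖ := norm_add_le _ _
    _ ≤ ‖Ea - 1‖ * ‖Eb‖ + ‖Eb - 1‖ := by gcongr; exact norm_mul_le _ _
    _ ≤ (2*h) * K + 2*h := by gcongr
    _ = 2*h*(K+1) := by ring
  have hKnn : (0:ℝ) ≤ K := hK0.le
  have hhn : (0:ℝ) ≤ h := h0.le
  have hEbEcK : ‖Eb * Ec‖ ≤ K * K := by
    refine (norm_mul_le _ _).trans ?_
    exact mul_le_mul hEbK hEcK (norm_nonneg _) hKnn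
  have hEaEbK : ‖Ea * Eb‖ ≤ K * K := by
    refine (norm_mul_le _ _).trans ?_
    exact mul_le_mul hEaK hEbK (norm_nonneg _) hKnn
  -- bound on Ψ - 1
  have hΨdef : Ψ = Ea * Eb * Ec := by rw [hΨ, hEa, hEb, hEc]; rfl
  have hΨ1 : ‖Ψ - 1‖ ≤ C1 * h^2 := by
    have hid : Ψ - 1 = (Ea - 1 - (-a)) * (Eb * Ec) + (-a) * (Eb * Ec - 1)
        + ((Eb - 1 - (-b)) * Ec + (-b) * (Ec - 1)) + ((Ec - 1 - (-c)) + -(a + b + c)) := by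
      rw [hΨdef]; exact ring_id1 Ea Eb Ec a b c
    have hsq : ∀ y : M, ‖y‖ ≤ h → ‖exp (-y) - 1 - (-y)‖ ≤ 2 * h^2 := by
      intro y hy
      have h1' : ‖(-y : M)‖ ≤ 1 := by rw [norm_neg]; exact hy.trans h1
      refine (norm_exp_sub_one_sub_le h1').trans ?_
      rw [norm_neg]
      have : ‖y‖^2 ≤ h^2 := pow_le_pow_left₀ (norm_nonneg y) hy 2
      linarith
    have t1 : ‖(Ea - 1 - (-a)) * (Eb * Ec)‖ ≤ (2*h^2) * (K*K) := by
      refine (norm_mul_le _ _).trans ?_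
      exact mul_le_mul (hsq a ha) hEbEcK (norm_nonneg _) (by positivity)
    have t2 : ‖(-a : M) * (Eb * Ec - 1)‖ ≤ h * (2*h*(K+1)) := by
      refine (norm_mul_le _ _).trans ?_
      rw [norm_neg]
      exact mul_le_mul ha hEbEc (norm_nonneg _) hhn
    have t3 : ‖(Eb - 1 - (-b)) * Ec‖ ≤ (2*h^2) * K := by
      refine (norm_mul_le _ _).trans ?_
      exact mul_le_mul (hsq b hb) hEcK (norm_nonneg _) (by positivity)
    have t4 : ‖(-b : M) * (Ec - 1)‖ ≤ h * (2*h) := by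
      refine (norm_mul_le _ _).trans ?_
      rw [norm_neg]
      exact mul_le_mul hb hEc1 (norm_nonneg _) hhn
    have t5 : ‖(Ec - 1 - (-c) : M) + -(a + b + c)‖ ≤ 2*h^2 + h^2 := by
      refine (norm_add_le _ _).trans ?_
      refine add_le_add (hsq c hc) ?_
      rw [norm_neg]; exact habc
    have s1 : ‖(Ea - 1 - (-a)) * (Eb * Ec) + (-a) * (Eb * Ec - 1)‖ ≤
        (2*h^2)*(K*K) + h*(2*h*(K+1)) := (norm_add_le _ _).trans (add_le_add t1 t2)
    have s2 : ‖(Eb - 1 - (-b)) * Ec + (-b) * (Ec - 1)‖ ≤ (2*h^2)*K + h*(2*h) :=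
      (norm_add_le _ _).trans (add_le_add t3 t4)
    rw [hid]
    calc ‖(Ea - 1 - (-a)) * (Eb * Ec) + (-a) * (Eb * Ec - 1)
          + ((Eb - 1 - (-b)) * Ec + (-b) * (Ec - 1)) + ((Ec - 1 - (-c)) + -(a + b + c))‖
        ≤ ‖(Ea - 1 - (-a)) * (Eb * Ec) + (-a) * (Eb * Ec - 1)
            + ((Eb - 1 - (-b)) * Ec + (-b) * (Ec - 1))‖
          + ‖(Ec - 1 - (-c) : M) + -(a + b + c)‖ := norm_add_le _ _
      _ ≤ (‖(Ea - 1 - (-a)) * (Eb * Ec) + (-a) * (Eb * Ec - 1)‖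
            + ‖(Eb - 1 - (-b)) * Ec + (-b) * (Ec - 1)‖)
          + ‖(Ec - 1 - (-c) : M) + -(a + b + c)‖ := by gcongr; exact norm_add_le _ _
      _ ≤ ((2*h^2)*(K*K) + h*(2*h*(K+1)) + ((2*h^2)*K + h*(2*h))) + (2*h^2 + h^2) :=
          add_le_add (add_le_add s1 s2) t5
      _ = C1 * h^2 := by rw [hC1]; ring
  -- rewrite of the holonomy derivative
  have la : (fderiv ℂ (exp) (-a)) a' = a' + Da := by rw [hDa]; abel
  have lb : (fderiv ℂ (exp) (-b)) b' = b' + Db := by rw [hDb]; abel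
  have lc : (fderiv ℂ (exp) (-c)) c' = c' + Dc := by rw [hDc]; abel
  have hRid : P + (a' + b' + c') =
      -(Da * (Eb * Ec)) - Ea * Db * Ec - (Ea * Eb) * Dc
      - a' * (Eb * Ec - 1) - (Ea - 1) * b' * Ec - b' * (Ec - 1) - (Ea * Eb - 1) * c' := by
    rw [hPval, la, lb, lc]; exact ring_id2 Ea Eb Ec a' b' c' Da Db Dc
  have hRb : ‖P + (a' + b' + c')‖ ≤ C2 * h * (‖a'‖ + ‖b'‖ + ‖c'‖) := by
    rw [hRid]
    have r1 : ‖Da * (Eb * Ec)‖ ≤ (2*h*‖a'‖) * (K*K) :=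
      (norm_mul_le _ _).trans (mul_le_mul hDab hEbEcK (norm_nonneg _) (by positivity))
    have r2 : ‖Ea * Db * Ec‖ ≤ K * (2*h*‖b'‖) * K := by
      refine (norm_mul_le _ _).trans ?_
      have : ‖Ea * Db‖ ≤ K * (2*h*‖b'‖) :=
        (norm_mul_le _ _).trans (mul_le_mul hEaK hDbb (norm_nonneg _) hKnn)
      exact mul_le_mul this hEcK (norm_nonneg _) (by positivity)
    have r3 : ‖(Ea * Eb) * Dc‖ ≤ (K*K) * (2*h*‖c'‖) :=
      (norm_mul_le _ _).trans (mul_le_mul hEaEbK hDcb (norm_nonneg _) (by positivity))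
    have r4 : ‖a' * (Eb * Ec - 1)‖ ≤ ‖a'‖ * (2*h*(K+1)) :=
      (norm_mul_le _ _).trans (mul_le_mul_of_nonneg_left hEbEc (norm_nonneg _))
    have r5 : ‖(Ea - 1) * b' * Ec‖ ≤ (2*h) * ‖b'‖ * K := by
      refine (norm_mul_le _ _).trans ?_
      have : ‖(Ea - 1) * b'‖ ≤ (2*h) * ‖b'‖ :=
        (norm_mul_le _ _).trans (mul_le_mul_of_nonneg_right hEa1 (norm_nonneg _))
      exact mul_le_mul this hEcK (norm_nonneg _) (by positivity)
    have r6 : ‖b' * (Ec - 1)‖ ≤ ‖b'‖ * (2*h) :=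
      (norm_mul_le _ _).trans (mul_le_mul_of_nonneg_left hEc1 (norm_nonneg _))
    have r7 : ‖(Ea * Eb - 1) * c'‖ ≤ (2*h*(K+1)) * ‖c'‖ :=
      (norm_mul_le _ _).trans (mul_le_mul_of_nonneg_right hEaEb (norm_nonneg _))
    calc ‖-(Da * (Eb * Ec)) - Ea * Db * Ec - (Ea * Eb) * Dc
          - a' * (Eb * Ec - 1) - (Ea - 1) * b' * Ec - b' * (Ec - 1) - (Ea * Eb - 1) * c'‖
        ≤ ‖-(Da * (Eb * Ec)) - Ea * Db * Ec - (Ea * Eb) * Dc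
            - a' * (Eb * Ec - 1) - (Ea - 1) * b' * Ec - b' * (Ec - 1)‖
          + ‖(Ea * Eb - 1) * c'‖ := norm_sub_le _ _
      _ ≤ (‖-(Da * (Eb * Ec)) - Ea * Db * Ec - (Ea * Eb) * Dc
            - a' * (Eb * Ec - 1) - (Ea - 1) * b' * Ec‖ + ‖b' * (Ec - 1)‖)
          + ‖(Ea * Eb - 1) * c'‖ := by gcongr; exact norm_sub_le _ _
      _ ≤ ((‖-(Da * (Eb * Ec)) - Ea * Db * Ec - (Ea * Eb) * Dc
            - a' * (Eb * Ec - 1)‖ + ‖(Ea - 1) * b' * Ec‖) + ‖b' * (Ec - 1)‖)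
          + ‖(Ea * Eb - 1) * c'‖ := by gcongr; exact norm_sub_le _ _
      _ ≤ (((‖-(Da * (Eb * Ec)) - Ea * Db * Ec - (Ea * Eb) * Dc‖ + ‖a' * (Eb * Ec - 1)‖)
            + ‖(Ea - 1) * b' * Ec‖) + ‖b' * (Ec - 1)‖)
          + ‖(Ea * Eb - 1) * c'‖ := by gcongr; exact norm_sub_le _ _
      _ ≤ ((((‖-(Da * (Eb * Ec)) - Ea * Db * Ec‖ + ‖(Ea * Eb) * Dc‖) + ‖a' * (Eb * Ec - 1)‖)
            + ‖(Ea - 1) * b' * Ec‖) + ‖b' * (Ec - 1)‖)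
          + ‖(Ea * Eb - 1) * c'‖ := by gcongr; exact norm_sub_le _ _
      _ ≤ (((((‖Da * (Eb * Ec)‖ + ‖Ea * Db * Ec‖) + ‖(Ea * Eb) * Dc‖) + ‖a' * (Eb * Ec - 1)‖)
            + ‖(Ea - 1) * b' * Ec‖) + ‖b' * (Ec - 1)‖)
          + ‖(Ea * Eb - 1) * c'‖ := by
          gcongr
          exact (norm_sub_le _ _).trans (by rw [norm_neg])
      _ ≤ ((((((2*h*‖a'‖) * (K*K) + K * (2*h*‖b'‖) * K) + (K*K) * (2*h*‖c'‖))
            + ‖a'‖ * (2*h*(K+1))) + (2*h) * ‖b'‖ * K) + ‖b'‖ * (2*h))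
          + (2*h*(K+1)) * ‖c'‖ := by
          exact add_le_add (add_le_add (add_le_add (add_le_add (add_le_add
            (add_le_add r1 r2) r3) r4) r5) r6) r7
      _ = C2 * h * (‖a'‖ + ‖b'‖ + ‖c'‖) := by rw [hC2]; ring
  -- conjugation identity for the x-derivative
  have hconj : (fderiv ℂ (exp) (-x)) x' = Exm * (W * Exm) := by
    have hcj := fderiv_exp_neg_apply x x'
    exact hcj
  -- key decomposition of the difference of derivatives
  have hDelta : fderiv ℂ (transportedPsi n) (x, a, b, c) (x', a', b', c') - P =
      Exm * ((Ψ - 1) * W - W * (Exm * (Ψ - 1) * Exp))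
      + Exm * (P * (Exp - 1) - (Exp - 1) * P) := by
    rw [hTval, hconj]
    have e1 := ring_id3 Exm Exp Ψ W P
    rw [u1, mul_one, one_mul] at e1
    rw [e1]
    abel
  -- final estimates
  have hΨW : ‖(Ψ - 1) * W‖ ≤ (C1*h^2) * (4*‖x'‖) :=
    (norm_mul_le _ _).trans (mul_le_mul hΨ1 hWb (norm_nonneg _) (by positivity))
  have hmid : ‖Exm * (Ψ - 1) * Exp‖ ≤ K * (C1*h^2) * K := by
    have hExpK : ‖Exp‖ ≤ K := norm_exp_le' hx1
    refine (norm_mul_le _ _).trans ?_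
    have : ‖Exm * (Ψ - 1)‖ ≤ K * (C1*h^2) :=
      (norm_mul_le _ _).trans (mul_le_mul hExmK hΨ1 (norm_nonneg _) hKnn)
    exact mul_le_mul this hExpK (norm_nonneg _) (by positivity)
  have hWmid : ‖W * (Exm * (Ψ - 1) * Exp)‖ ≤ (4*‖x'‖) * (K * (C1*h^2) * K) :=
    (norm_mul_le _ _).trans (mul_le_mul hWb hmid (norm_nonneg _) (by positivity))
  have hpiece1 : ‖Exm * ((Ψ - 1) * W - W * (Exm * (Ψ - 1) * Exp))‖ ≤
      K * ((C1*h^2) * (4*‖x'‖) + (4*‖x'‖) * (K * (C1*h^2) * K)) := by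
    refine (norm_mul_le _ _).trans ?_
    refine mul_le_mul hExmK ((norm_sub_le _ _).trans (add_le_add hΨW hWmid))
      (norm_nonneg _) hKnn
  have hcm : ‖P * (Exp - 1) - (Exp - 1) * P‖ ≤
      2 * (2*h) * (C2 * h * (‖a'‖ + ‖b'‖ + ‖c'‖) + ‖a' + b' + c'‖) := by
    have hPdec : P = (P + (a' + b' + c')) - (a' + b' + c') := by abel
    have hid2 := ring_id4 P Exp (a' + b' + c')
    rw [hid2]
    have q1 : ‖(P + (a' + b' + c')) * (Exp - 1)‖ ≤
        (C2 * h * (‖a'‖ + ‖b'‖ + ‖c'‖)) * (2*h) :=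
      (norm_mul_le _ _).trans (mul_le_mul hRb hExp1 (norm_nonneg _) (by positivity))
    have q2 : ‖(Exp - 1) * (P + (a' + b' + c'))‖ ≤
        (2*h) * (C2 * h * (‖a'‖ + ‖b'‖ + ‖c'‖)) :=
      (norm_mul_le _ _).trans (mul_le_mul hExp1 hRb (norm_nonneg _) (by positivity))
    have q3 : ‖(a' + b' + c') * (Exp - 1)‖ ≤ ‖a' + b' + c'‖ * (2*h) :=
      (norm_mul_le _ _).trans (mul_le_mul_of_nonneg_left hExp1 (norm_nonneg _))
    have q4 : ‖(Exp - 1) * (a' + b' + c')‖ ≤ (2*h) * ‖a' + b' + c'‖ :=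
      (norm_mul_le _ _).trans (mul_le_mul_of_nonneg_right hExp1 (norm_nonneg _))
    calc ‖((P + (a' + b' + c')) * (Exp - 1) - (Exp - 1) * (P + (a' + b' + c')))
          - ((a' + b' + c') * (Exp - 1) - (Exp - 1) * (a' + b' + c'))‖
        ≤ ‖(P + (a' + b' + c')) * (Exp - 1) - (Exp - 1) * (P + (a' + b' + c'))‖
          + ‖(a' + b' + c') * (Exp - 1) - (Exp - 1) * (a' + b' + c')‖ := norm_sub_le _ _
      _ ≤ (‖(P + (a' + b' + c')) * (Exp - 1)‖ + ‖(Exp - 1) * (P + (a' + b' + c'))‖)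
          + (‖(a' + b' + c') * (Exp - 1)‖ + ‖(Exp - 1) * (a' + b' + c')‖) :=
          add_le_add (norm_sub_le _ _) (norm_sub_le _ _)
      _ ≤ ((C2 * h * (‖a'‖ + ‖b'‖ + ‖c'‖)) * (2*h) + (2*h) * (C2 * h * (‖a'‖ + ‖b'‖ + ‖c'‖)))
          + (‖a' + b' + c'‖ * (2*h) + (2*h) * ‖a' + b' + c'‖) :=
          add_le_add (add_le_add q1 q2) (add_le_add q3 q4)
      _ = 2 * (2*h) * (C2 * h * (‖a'‖ + ‖b'‖ + ‖c'‖) + ‖a' + b' + c'‖) := by ring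
  have hpiece2 : ‖Exm * (P * (Exp - 1) - (Exp - 1) * P)‖ ≤
      K * (2 * (2*h) * (C2 * h * (‖a'‖ + ‖b'‖ + ‖c'‖) + ‖a' + b' + c'‖)) :=
    (norm_mul_le _ _).trans (mul_le_mul hExmK hcm (norm_nonneg _) hKnn)
  rw [hDelta]
  have hfinal := (norm_add_le _ _).trans (add_le_add hpiece1 hpiece2)
  refine hfinal.trans ?_
  have hC1pos : (0:ℝ) < C1 := by rw [hC1]; linarith [sq_nonneg K]
  have hC2pos : (0:ℝ) < C2 := by rw [hC2]; linarith [sq_nonneg K]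
  have e2 : K * ((C1*h^2) * (4*‖x'‖) + (4*‖x'‖) * (K * (C1*h^2) * K))
      = (4*K*(1+K^2)*C1) * (h^2*‖x'‖) := by ring
  have e3 : K * (2 * (2*h) * (C2 * h * (‖a'‖ + ‖b'‖ + ‖c'‖) + ‖a' + b' + c'‖))
      = (4*K*C2) * (h^2 * (‖a'‖ + ‖b'‖ + ‖c'‖)) + (4*K) * (h * ‖a' + b' + c'‖) := by ring
  rw [e2, e3]
  have m1 : (0:ℝ) ≤ h * ‖a' + b' + c'‖ := mul_nonneg hhn (norm_nonneg _)
  have m2 : (0:ℝ) ≤ h^2 * ‖x'‖ := mul_nonneg (by positivity) (norm_nonneg _)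
  have m3 : (0:ℝ) ≤ h^2 * (‖a'‖ + ‖b'‖ + ‖c'‖) := by positivity
  have hq1 : (0:ℝ) ≤ 1 + K^2 := by linarith [sq_nonneg K]
  have hp1 : (0:ℝ) ≤ K*C2 := mul_nonneg hKnn hC2pos.le
  have hp2 : (0:ℝ) ≤ K*(1+K^2)*C1 := mul_nonneg (mul_nonneg hKnn hq1) hC1pos.le
  have k1 : (4*K*(1+K^2)*C1) * (h^2*‖x'‖) ≤
      (4*K*(1+K^2)*C1 + 4*K + 4*K*C2) * (h^2*‖x'‖) :=
    mul_le_mul_of_nonneg_right (by linarith) m2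
  have k2 : (4*K*C2) * (h^2 * (‖a'‖ + ‖b'‖ + ‖c'‖)) ≤
      (4*K*(1+K^2)*C1 + 4*K + 4*K*C2) * (h^2 * (‖a'‖ + ‖b'‖ + ‖c'‖)) :=
    mul_le_mul_of_nonneg_right (by linarith) m3
  have k3 : (4*K) * (h * ‖a' + b' + c'‖) ≤
      (4*K*(1+K^2)*C1 + 4*K + 4*K*C2) * (h * ‖a' + b' + c'‖) :=
    mul_le_mul_of_nonneg_right (by linarith) m1
  calc (4*K*(1+K^2)*C1) * (h^2*‖x'‖)
        + ((4*K*C2) * (h^2 * (‖a'‖ + ‖b'‖ + ‖c'‖)) + (4*K) * (h * ‖a' + b' + c'‖))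
      ≤ (4*K*(1+K^2)*C1 + 4*K + 4*K*C2) * (h^2*‖x'‖)
        + ((4*K*(1+K^2)*C1 + 4*K + 4*K*C2) * (h^2 * (‖a'‖ + ‖b'‖ + ‖c'‖))
          + (4*K*(1+K^2)*C1 + 4*K + 4*K*C2) * (h * ‖a' + b' + c'‖)) :=
        add_le_add k1 (add_le_add k2 k3)
    _ = (4*K*(1+K^2)*C1 + 4*K + 4*K*C2)
        * (h * ‖a' + b' + c'‖ + h ^ 2 * (‖x'‖ + ‖a'‖ + ‖b'‖ + ‖c'‖)) := by ring
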